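/- For the first weighted model of Kauers–Yatchak (steps (-1,0),(-1,-1),(0,-1),(1,-1),(1,1) with weights 1,1,λ,1,1 and (1,0) with weight 2), and H(x,y) = x^{a+1}y^{b+1}: the alternating orbit sum of H over the group of order 6 vanishes if and only if (a,b) = (0,0). In particular, evaluating the alternating sum at y = x-1 and letting x → ∞ gives the leading behavior H_α(x, x-1) = x^{a+b+2} - x^{3b-a+2} + o(·), forcing a = b, and a further expansion forces a = b = 0. -/

import Mathlib

open Filter Topology Finset

noncomputable def Cf (lam : ℂ) (k : ℕ) : ℂ := 2 * ((k:ℂ) - 1) / (2 ^ 2 * (k:ℂ) + lam * 2 + 1)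
noncomputable def Ef (lam : ℂ) (k : ℕ) : ℂ :=
  (2 ^ 2 * (k:ℂ) ^ 2 + lam * 2 * (k:ℂ) + 1) / ((k:ℂ) - 1) ^ 2
noncomputable def Gf (lam : ℂ) (k : ℕ) : ℂ := (lam * 2 + 2 ^ 2 + 1) / (2 ^ 2 * ((k:ℂ) - 1) ^ 2)

lemma cinv_tendsto : Tendsto (fun k : ℕ => ((k:ℂ))⁻¹) atTop (nhds 0) := by
  rw [tendsto_zero_iff_norm_tendsto_zero]
  simp only [norm_inv, Complex.norm_natCast]
  exact tendsto_inv_atTop_zero.comp tendsto_natCast_atTop_atTop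

lemma cinv1_tendsto : Tendsto (fun k : ℕ => ((k:ℂ) - 1)⁻¹) atTop (nhds 0) := by
  have h1 : Tendsto (fun k : ℕ => k - 1) atTop atTop := tendsto_sub_atTop_nat 1
  refine (cinv_tendsto.comp h1).congr' ?_
  filter_upwards [eventually_ge_atTop 1] with k hk
  simp [Nat.cast_sub hk]

lemma ev_ne (lam : ℂ) : ∀ᶠ k : ℕ in atTop, (2:ℂ) ^ 2 * (k:ℂ) + lam * 2 + 1 ≠ 0 := by
  filter_upwards [eventually_gt_atTop ⌈‖lam * 2 + 1‖⌉₊] with k hk h0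
  have h4 : (2:ℂ) ^ 2 * (k:ℂ) = -(lam * 2 + 1) := by linear_combination h0
  have := congrArg norm h4
  rw [norm_neg, norm_mul, Complex.norm_natCast] at this
  have hn : ‖lam * 2 + 1‖ ≤ ⌈‖lam * 2 + 1‖⌉₊ := Nat.le_ceil _
  have hk' : (⌈‖lam * 2 + 1‖⌉₊ : ℝ) < k := by exact_mod_cast hk
  have h2 : ‖(2:ℂ)^2‖ = 4 := by norm_num [norm_pow]
  nlinarith [Nat.cast_nonneg (α := ℝ) k]

lemma ev_k1 : ∀ᶠ k : ℕ in atTop, ((k:ℂ) ≠ 0 ∧ (k:ℂ) - 1 ≠ 0) := by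
  filter_upwards [eventually_ge_atTop 2] with k hk
  constructor
  · exact_mod_cast Nat.cast_ne_zero.2 (by omega)
  · intro h
    have : (k:ℂ) = 1 := by linear_combination h
    have : k = 1 := by exact_mod_cast this
    omega

lemma Cf_tendsto (lam : ℂ) : Tendsto (Cf lam) atTop (nhds 2⁻¹) := by
  have key : Tendsto (fun k : ℕ => (2 - 2 * ((k:ℂ))⁻¹) / (2 ^ 2 + (lam * 2 + 1) * ((k:ℂ))⁻¹))
      atTop (nhds 2⁻¹) := by
    have h1 : Tendsto (fun k : ℕ => (2 : ℂ) - 2 * ((k:ℂ))⁻¹) atTop (nhds 2) := by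
      simpa using tendsto_const_nhds.sub (cinv_tendsto.const_mul 2)
    have h2 : Tendsto (fun k : ℕ => (2:ℂ) ^ 2 + (lam * 2 + 1) * ((k:ℂ))⁻¹) atTop
        (nhds (2 ^ 2)) := by
      simpa using tendsto_const_nhds.add (cinv_tendsto.const_mul (lam * 2 + 1))
    convert h1.div h2 (by norm_num) using 1
    · rfl
    · norm_num
  refine key.congr' ?_
  filter_upwards [ev_k1, ev_ne lam] with k ⟨hk, hk1⟩ hd
  have hki : (k:ℂ) * ((k:ℂ))⁻¹ = 1 := mul_inv_cancel₀ hk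
  rw [Cf]
  rw [show (2:ℂ) ^ 2 + (lam * 2 + 1) * ((k:ℂ))⁻¹ = (2 ^ 2 * (k:ℂ) + lam * 2 + 1) * ((k:ℂ))⁻¹ by
    linear_combination (-4 : ℂ) * hki]
  rw [show (2:ℂ) - 2 * ((k:ℂ))⁻¹ = (2 * ((k:ℂ) - 1)) * ((k:ℂ))⁻¹ by linear_combination (-2 : ℂ) * hki]
  rw [mul_div_mul_right _ _ (inv_ne_zero hk)]

lemma Ef_tendsto (lam : ℂ) : Tendsto (Ef lam) atTop (nhds 4) := by
  have key : Tendsto (fun k : ℕ =>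
      (2 ^ 2 + lam * 2 * ((k:ℂ))⁻¹ + (((k:ℂ))⁻¹) ^ 2) / (1 - ((k:ℂ))⁻¹) ^ 2)
      atTop (nhds 4) := by
    have h1 : Tendsto (fun k : ℕ => (2:ℂ) ^ 2 + lam * 2 * ((k:ℂ))⁻¹ + (((k:ℂ))⁻¹) ^ 2) atTop
        (nhds (2 ^ 2)) := by
      simpa using (tendsto_const_nhds.add (cinv_tendsto.const_mul (lam * 2))).add
        ((cinv_tendsto.pow 2))
    have h2a : Tendsto (fun k : ℕ => (1:ℂ) - ((k:ℂ))⁻¹) atTop (nhds 1) := by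
      simpa using (tendsto_const_nhds (x := (1:ℂ))).sub cinv_tendsto
    have h2 : Tendsto (fun k : ℕ => ((1:ℂ) - ((k:ℂ))⁻¹) ^ 2) atTop (nhds 1) := by
      simpa using h2a.pow 2
    convert h1.div h2 (by norm_num) using 1
    · rfl
    · norm_num
  refine key.congr' ?_
  filter_upwards [ev_k1] with k ⟨hk, hk1⟩
  have hki : (k:ℂ) * ((k:ℂ))⁻¹ = 1 := mul_inv_cancel₀ hk
  rw [Ef]
  rw [show (2:ℂ) ^ 2 + lam * 2 * ((k:ℂ))⁻¹ + (((k:ℂ))⁻¹) ^ 2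
        = (2 ^ 2 * (k:ℂ) ^ 2 + lam * 2 * (k:ℂ) + 1) * (((k:ℂ))⁻¹) ^ 2 by
      linear_combination (-(4*(k:ℂ)*((k:ℂ))⁻¹ + 4 + 2*lam*((k:ℂ))⁻¹)) * hki]
  rw [show ((1:ℂ) - ((k:ℂ))⁻¹) ^ 2 = ((k:ℂ) - 1) ^ 2 * (((k:ℂ))⁻¹) ^ 2 by
    linear_combination (-((k:ℂ)*((k:ℂ))⁻¹ + 1 - 2*((k:ℂ))⁻¹)) * hki]
  rw [mul_div_mul_right _ _ (pow_ne_zero 2 (inv_ne_zero hk))]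

lemma Gf_tendsto (lam : ℂ) : Tendsto (Gf lam) atTop (nhds 0) := by
  have key : Tendsto (fun k : ℕ => (lam * 2 + 2 ^ 2 + 1) / (2 ^ 2) * (((k:ℂ) - 1)⁻¹) ^ 2)
      atTop (nhds 0) := by
    simpa using (cinv1_tendsto.pow 2).const_mul ((lam * 2 + 2 ^ 2 + 1) / (2 ^ 2))
  refine key.congr' ?_
  filter_upwards [] with k
  rw [Gf, div_eq_mul_inv, div_eq_mul_inv, mul_inv, inv_pow, mul_assoc]

noncomputable def gf (lam : ℂ) (A B : ℕ) (k : ℕ) : ℂ :=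
  2 ^ A - ((2 * (k:ℂ))⁻¹) ^ A + ((2 * (k:ℂ))⁻¹) ^ A * (Ef lam k) ^ B
    - (Cf lam k) ^ A * (Ef lam k) ^ B + (Cf lam k) ^ A * (Gf lam k) ^ B
    - 2 ^ A * (Gf lam k) ^ B

lemma gf_mul (lam : ℂ) (a b k : ℕ) (hk : (k:ℂ) ≠ 0) (hk1 : (k:ℂ) - 1 ≠ 0) :
    gf lam (a+1) (b+1) k * ((k:ℂ) - 1) ^ (b+1) =
      (2:ℂ) ^ (a+1) * ((k:ℂ) - 1) ^ (b+1) - ((2 * (k:ℂ))⁻¹) ^ (a+1) * ((k:ℂ) - 1) ^ (b+1)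
      + ((2 * (k:ℂ))⁻¹) ^ (a+1) * ((2 ^ 2 * (k:ℂ) ^ 2 + lam * 2 * (k:ℂ) + 1) / ((k:ℂ) - 1)) ^ (b+1)
      - (2 * ((k:ℂ) - 1) / (2 ^ 2 * (k:ℂ) + lam * 2 + 1)) ^ (a+1)
          * ((2 ^ 2 * (k:ℂ) ^ 2 + lam * 2 * (k:ℂ) + 1) / ((k:ℂ) - 1)) ^ (b+1)
      + (2 * ((k:ℂ) - 1) / (2 ^ 2 * (k:ℂ) + lam * 2 + 1)) ^ (a+1)
          * ((lam * 2 + 2 ^ 2 + 1) / (2 ^ 2 * ((k:ℂ) - 1))) ^ (b+1)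
      - 2 ^ (a+1) * ((lam * 2 + 2 ^ 2 + 1) / (2 ^ 2 * ((k:ℂ) - 1))) ^ (b+1) := by
  have he : Ef lam k * ((k:ℂ) - 1) = (2 ^ 2 * (k:ℂ) ^ 2 + lam * 2 * (k:ℂ) + 1) / ((k:ℂ) - 1) := by
    rw [Ef]
    field_simp
  have hgg : Gf lam k * ((k:ℂ) - 1) = (lam * 2 + 2 ^ 2 + 1) / (2 ^ 2 * ((k:ℂ) - 1)) := by
    rw [Gf]
    field_simp
  rw [← he, ← hgg, gf]
  rw [show 2 * ((k:ℂ) - 1) / (2 ^ 2 * (k:ℂ) + lam * 2 + 1) = Cf lam k from rfl]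
  simp only [mul_pow]
  ring

lemma i2k_tendsto : Tendsto (fun k : ℕ => (2 * (k:ℂ))⁻¹) atTop (nhds 0) := by
  have : Tendsto (fun k : ℕ => (2:ℂ)⁻¹ * ((k:ℂ))⁻¹) atTop (nhds ((2:ℂ)⁻¹ * 0)) :=
    cinv_tendsto.const_mul _
  simpa [mul_inv, mul_comm] using this

lemma step_A (lam : ℂ) (a b : ℕ)
    (hEv : ∀ᶠ k : ℕ in atTop, gf lam (a+1) (b+1) k = 0) : a = b := by
  have hLim : Tendsto (gf lam (a+1) (b+1)) atTop
      (nhds ((2:ℂ) ^ (a+1) - (2⁻¹) ^ (a+1) * 4 ^ (b+1))) := by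
    have hC := Cf_tendsto lam
    have hE := Ef_tendsto lam
    have hG := Gf_tendsto lam
    have T := (((((tendsto_const_nhds (x := (2:ℂ) ^ (a+1))).sub (i2k_tendsto.pow (a+1))).add
        ((i2k_tendsto.pow (a+1)).mul (hE.pow (b+1)))).sub
        ((hC.pow (a+1)).mul (hE.pow (b+1)))).add
        ((hC.pow (a+1)).mul (hG.pow (b+1)))).sub
        ((tendsto_const_nhds (x := (2:ℂ) ^ (a+1))).mul (hG.pow (b+1)))
    have T' : Tendsto (gf lam (a+1) (b+1)) atTop
        (nhds ((2:ℂ) ^ (a+1) - 0 ^ (a+1) + 0 ^ (a+1) * 4 ^ (b+1) - (2⁻¹) ^ (a+1) * 4 ^ (b+1)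
          + (2⁻¹) ^ (a+1) * 0 ^ (b+1) - 2 ^ (a+1) * 0 ^ (b+1))) := T
    simpa [zero_pow] using T'
  have hval : (2:ℂ) ^ (a+1) - (2⁻¹) ^ (a+1) * 4 ^ (b+1) = 0 :=
    tendsto_nhds_unique hLim (Tendsto.congr' (EventuallyEq.symm hEv) tendsto_const_nhds)
  have h1 : (4:ℂ) ^ (a+1) = 4 ^ (b+1) := by
    calc (4:ℂ) ^ (a+1) = 2 ^ (a+1) * 2 ^ (a+1) := by rw [← mul_pow]; norm_num
    _ = (2 ^ (a+1) * (2⁻¹) ^ (a+1)) * 4 ^ (b+1) := by linear_combination (2:ℂ) ^ (a+1) * hval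
    _ = 4 ^ (b+1) := by rw [← mul_pow]; norm_num
  have h2 : (4:ℕ) ^ (a+1) = 4 ^ (b+1) := by exact_mod_cast h1
  have := Nat.pow_right_injective (by norm_num : 2 ≤ 4) h2
  omega

lemma D_tendsto (lam : ℂ) : Tendsto (fun k : ℕ => Cf lam k * Ef lam k) atTop (nhds 2) := by
  have := (Cf_tendsto lam).mul (Ef_tendsto lam)
  rw [show ((2:ℂ)⁻¹ * 4) = 2 by norm_num] at this
  exact this

lemma L1_tendsto (lam : ℂ) :
    Tendsto (fun k : ℕ => (k:ℂ) * (2 - Cf lam k * Ef lam k)) atTop (nhds (-(3/2))) := by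
  have key : Tendsto (fun k : ℕ =>
      (-6 - (4 * lam + 4) * ((k:ℂ))⁻¹) / ((2 ^ 2 + (lam * 2 + 1) * ((k:ℂ))⁻¹) * (1 - ((k:ℂ))⁻¹)))
      atTop (nhds (-(3/2))) := by
    have h1 : Tendsto (fun k : ℕ => (-6:ℂ) - (4 * lam + 4) * ((k:ℂ))⁻¹) atTop (nhds (-6)) := by
      simpa using (tendsto_const_nhds (x := (-6:ℂ))).sub (cinv_tendsto.const_mul (4 * lam + 4))
    have h2 : Tendsto (fun k : ℕ => ((2:ℂ) ^ 2 + (lam * 2 + 1) * ((k:ℂ))⁻¹) * (1 - ((k:ℂ))⁻¹))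
        atTop (nhds 4) := by
      have h2a : Tendsto (fun k : ℕ => (2:ℂ) ^ 2 + (lam * 2 + 1) * ((k:ℂ))⁻¹) atTop
          (nhds (2 ^ 2)) := by
        simpa using (tendsto_const_nhds (x := ((2:ℂ) ^ 2))).add (cinv_tendsto.const_mul _)
      have h2b : Tendsto (fun k : ℕ => (1:ℂ) - ((k:ℂ))⁻¹) atTop (nhds 1) := by
        simpa using (tendsto_const_nhds (x := (1:ℂ))).sub cinv_tendsto
      have := h2a.mul h2b
      rw [show ((2:ℂ) ^ 2 * 1) = 4 by norm_num] at this
      exact this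
    have := h1.div h2 (by norm_num)
    convert this using 1
    · rfl
    · norm_num
  refine key.congr' ?_
  filter_upwards [ev_k1, ev_ne lam] with k ⟨hk, hk1⟩ hne
  have hki : (k:ℂ) * ((k:ℂ))⁻¹ = 1 := mul_inv_cancel₀ hk
  rw [show ((2:ℂ) ^ 2 + (lam * 2 + 1) * ((k:ℂ))⁻¹) = (2 ^ 2 * (k:ℂ) + lam * 2 + 1) * ((k:ℂ))⁻¹
      from by linear_combination (-4:ℂ) * hki]
  rw [show ((1:ℂ) - ((k:ℂ))⁻¹) = ((k:ℂ) - 1) * ((k:ℂ))⁻¹ from by linear_combination (-1:ℂ) * hki]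
  rw [show ((-6:ℂ) - (4 * lam + 4) * ((k:ℂ))⁻¹) = (-6 * (k:ℂ) - (4 * lam + 4)) * ((k:ℂ))⁻¹
      from by linear_combination (6:ℂ) * hki]
  rw [Cf, Ef, div_mul_div_comm]
  rw [show ((2 ^ 2 * (k:ℂ) + lam * 2 + 1) * ((k:ℂ))⁻¹) * (((k:ℂ) - 1) * ((k:ℂ))⁻¹)
      = ((2 ^ 2 * (k:ℂ) + lam * 2 + 1) * ((k:ℂ) - 1)) * (((k:ℂ))⁻¹ * ((k:ℂ))⁻¹) from by ring]
  rw [show (-6 * (k:ℂ) - (4 * lam + 4)) * ((k:ℂ))⁻¹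
      = ((-6 * (k:ℂ) - (4 * lam + 4)) * (k:ℂ)) * (((k:ℂ))⁻¹ * ((k:ℂ))⁻¹) from by
      linear_combination ((6 * (k:ℂ) + 4 * lam + 4) * ((k:ℂ))⁻¹) * hki]
  rw [mul_div_mul_right _ _ (mul_ne_zero (inv_ne_zero hk) (inv_ne_zero hk))]
  rw [div_eq_iff (mul_ne_zero hne hk1)]
  have hD : (2 ^ 2 * (k:ℂ) + lam * 2 + 1) * ((k:ℂ) - 1) ^ 2 ≠ 0 := mul_ne_zero hne (pow_ne_zero 2 hk1)
  rw [sub_div' hD, mul_div_assoc', div_mul_eq_mul_div, eq_div_iff hD]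
  ring

lemma step_B (lam : ℂ) (a : ℕ) (ha : a ≠ 0)
    (hEv : ∀ᶠ k : ℕ in atTop, gf lam (a+1) (a+1) k = 0) : False := by
  set gB2 : ℕ → ℂ := fun k =>
    ((k:ℂ) * (2 - Cf lam k * Ef lam k))
        * (∑ i ∈ range (a+1), (2:ℂ) ^ i * (Cf lam k * Ef lam k) ^ (a - i))
      + ((2:ℂ)⁻¹) ^ (a+1) * (((k:ℂ))⁻¹) ^ a * ((Ef lam k) ^ (a+1) - 1)
      + ((lam * 2 + 2 ^ 2 + 1) / (2 ^ 2)) ^ (a+1) * ((k:ℂ) * (((k:ℂ) - 1)⁻¹))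
          * ((((k:ℂ) - 1)⁻¹) ^ (2*a+1)) * ((Cf lam k) ^ (a+1) - 2 ^ (a+1)) with hgB2
  have hEq : ∀ᶠ k : ℕ in atTop, (k:ℂ) * gf lam (a+1) (a+1) k = gB2 k := by
    filter_upwards [ev_k1] with k ⟨hk, hk1⟩
    have hfac := geom_sum₂_mul (2:ℂ) (Cf lam k * Ef lam k) (a+1)
    simp only [Nat.add_sub_cancel] at hfac
    have hki : (k:ℂ) * ((k:ℂ))⁻¹ = 1 := mul_inv_cancel₀ hk
    have haux1 : (k:ℂ) * ((2 * (k:ℂ))⁻¹) ^ (a+1) = ((2:ℂ)⁻¹) ^ (a+1) * (((k:ℂ))⁻¹) ^ a := by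
      rw [mul_inv]
      calc (k:ℂ) * ((2:ℂ)⁻¹ * ((k:ℂ))⁻¹) ^ (a+1)
          = ((k:ℂ) * ((k:ℂ))⁻¹) * (((2:ℂ)⁻¹) ^ (a+1) * (((k:ℂ))⁻¹) ^ a) := by ring
        _ = ((2:ℂ)⁻¹) ^ (a+1) * (((k:ℂ))⁻¹) ^ a := by rw [hki, one_mul]
    have haux2 : (k:ℂ) * (Gf lam k) ^ (a+1)
        = ((lam * 2 + 2 ^ 2 + 1) / (2 ^ 2)) ^ (a+1) * ((k:ℂ) * (((k:ℂ) - 1)⁻¹))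
            * ((((k:ℂ) - 1)⁻¹) ^ (2*a+1)) := by
      have hGsplit : Gf lam k = (lam * 2 + 2 ^ 2 + 1) / (2 ^ 2) * (((k:ℂ) - 1)⁻¹) ^ 2 := by
        rw [Gf, div_eq_mul_inv, mul_inv, ← inv_pow ((k:ℂ) - 1) 2, div_eq_mul_inv]
        ring
      rw [hGsplit, mul_pow]
      ring
    rw [hgB2, gf]
    linear_combination (-(k:ℂ)) * hfac + ((Ef lam k) ^ (a+1) - 1) * haux1
      + ((Cf lam k) ^ (a+1) - 2 ^ (a+1)) * haux2
  have hSum : Tendsto (fun k : ℕ => ∑ i ∈ range (a+1), (2:ℂ) ^ i * (Cf lam k * Ef lam k) ^ (a - i))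
      atTop (nhds (((a:ℂ) + 1) * 2 ^ a)) := by
    have := tendsto_finset_sum (range (a+1))
      (fun i _ => (tendsto_const_nhds (x := (2:ℂ) ^ i)).mul ((D_tendsto lam).pow (a - i)))
    have hcong : ∀ i ∈ range (a+1), (2:ℂ) ^ i * 2 ^ (a - i) = 2 ^ a := by
      intro i hi
      rw [← pow_add, Nat.add_sub_cancel' (Nat.lt_succ_iff.mp (mem_range.mp hi))]
    rw [sum_congr rfl hcong, sum_const, card_range, nsmul_eq_mul] at this
    push_cast at this ⊢
    exact this
  have hkw : Tendsto (fun k : ℕ => (k:ℂ) * (((k:ℂ) - 1)⁻¹)) atTop (nhds 1) := by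
    have key : Tendsto (fun k : ℕ => 1 + ((k:ℂ) - 1)⁻¹) atTop (nhds 1) := by
      simpa using (tendsto_const_nhds (x := (1:ℂ))).add cinv1_tendsto
    refine key.congr' ?_
    filter_upwards [ev_k1] with k ⟨hk, hk1⟩
    linear_combination - mul_inv_cancel₀ hk1
  have hB2 : Tendsto gB2 atTop (nhds ((-(3/2)) * (((a:ℂ) + 1) * 2 ^ a) + 0 + 0)) := by
    rw [hgB2]
    refine (((L1_tendsto lam).mul hSum).add ?_).add ?_
    · have h0 : Tendsto (fun k : ℕ => ((2:ℂ)⁻¹) ^ (a+1) * (((k:ℂ))⁻¹) ^ a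
          * ((Ef lam k) ^ (a+1) - 1)) atTop
          (nhds (((2:ℂ)⁻¹) ^ (a+1) * (0:ℂ) ^ a * ((4:ℂ) ^ (a+1) - 1))) :=
        ((tendsto_const_nhds.mul (cinv_tendsto.pow a))).mul
          (((Ef_tendsto lam).pow (a+1)).sub tendsto_const_nhds)
      simpa [zero_pow ha] using h0
    · have h0 : Tendsto (fun k : ℕ => ((lam * 2 + 2 ^ 2 + 1) / (2 ^ 2)) ^ (a+1)
          * ((k:ℂ) * (((k:ℂ) - 1)⁻¹)) * ((((k:ℂ) - 1)⁻¹) ^ (2*a+1))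
          * ((Cf lam k) ^ (a+1) - 2 ^ (a+1))) atTop
          (nhds (((lam * 2 + 2 ^ 2 + 1) / (2 ^ 2)) ^ (a+1) * 1 * ((0:ℂ) ^ (2*a+1))
            * (((2:ℂ)⁻¹) ^ (a+1) - 2 ^ (a+1)))) :=
        ((tendsto_const_nhds.mul hkw).mul (cinv1_tendsto.pow (2*a+1))).mul
          (((Cf_tendsto lam).pow (a+1)).sub tendsto_const_nhds)
      simpa [zero_pow (Nat.succ_ne_zero (2*a))] using h0
  have hzero : ∀ᶠ k : ℕ in atTop, gB2 k = 0 := by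
    filter_upwards [hEq, hEv] with k h1 h2
    rw [← h1, h2, mul_zero]
  have hval : (-(3/2:ℂ)) * (((a:ℂ) + 1) * 2 ^ a) + 0 + 0 = 0 :=
    tendsto_nhds_unique hB2 (Tendsto.congr' (EventuallyEq.symm hzero) tendsto_const_nhds)
  simp only [add_zero] at hval
  have : ((a:ℂ) + 1) * 2 ^ a ≠ 0 :=
    mul_ne_zero (Nat.cast_add_one_ne_zero a) (pow_ne_zero a two_ne_zero)
  have h32 : (-(3/2:ℂ)) ≠ 0 := by norm_num
  exact (mul_ne_zero h32 this) hval

/-- For the first weighted Kauers–Yatchak model (group of order 6, weight `λ`), the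
alternating orbit sum of `H(x,y) = x^{a+1}·y^{b+1}` vanishes identically (after the
substitution `y = z - 1`, as a rational function of `x` and `z`, i.e. at every point
where the denominators do not vanish) if and only if `(a,b) = (0,0)`. -/
theorem weighted_model_alternating_sum_vanishes_iff (lam : ℂ) (a b : ℕ) :
    (let H : ℂ → ℂ → ℂ := fun u v => u ^ (a + 1) * v ^ (b + 1)
     ∀ x z : ℂ, x ≠ 0 → z ≠ 0 → z - 1 ≠ 0 → x ^ 2 * z + lam * x + 1 ≠ 0 →
       H x (z - 1) - H ((x * z)⁻¹) (z - 1)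
         + H ((x * z)⁻¹) ((x ^ 2 * z ^ 2 + lam * x * z + 1) / (z - 1))
         - H (x * (z - 1) / (x ^ 2 * z + lam * x + 1))
             ((x ^ 2 * z ^ 2 + lam * x * z + 1) / (z - 1))
         + H (x * (z - 1) / (x ^ 2 * z + lam * x + 1))
             ((lam * x + x ^ 2 + 1) / (x ^ 2 * (z - 1)))
         - H x ((lam * x + x ^ 2 + 1) / (x ^ 2 * (z - 1))) = 0)
    ↔ (a = 0 ∧ b = 0) := by
  constructor
  · intro h
    replace h : ∀ x z : ℂ, x ≠ 0 → z ≠ 0 → z - 1 ≠ 0 → x ^ 2 * z + lam * x + 1 ≠ 0 →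
        x ^ (a + 1) * (z - 1) ^ (b + 1) - ((x * z)⁻¹) ^ (a + 1) * (z - 1) ^ (b + 1)
          + ((x * z)⁻¹) ^ (a + 1) * ((x ^ 2 * z ^ 2 + lam * x * z + 1) / (z - 1)) ^ (b + 1)
          - (x * (z - 1) / (x ^ 2 * z + lam * x + 1)) ^ (a + 1)
              * ((x ^ 2 * z ^ 2 + lam * x * z + 1) / (z - 1)) ^ (b + 1)
          + (x * (z - 1) / (x ^ 2 * z + lam * x + 1)) ^ (a + 1)
              * ((lam * x + x ^ 2 + 1) / (x ^ 2 * (z - 1))) ^ (b + 1)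
          - x ^ (a + 1) * ((lam * x + x ^ 2 + 1) / (x ^ 2 * (z - 1))) ^ (b + 1) = 0 := h
    have hEv : ∀ᶠ k : ℕ in atTop, gf lam (a+1) (b+1) k = 0 := by
      filter_upwards [ev_k1, ev_ne lam] with k ⟨hk, hk1⟩ hne
      have hs := h 2 (k:ℂ) two_ne_zero hk hk1 hne
      have h0 : gf lam (a+1) (b+1) k * ((k:ℂ) - 1) ^ (b+1) = 0 := by
        rw [gf_mul lam a b k hk hk1]
        exact hs
      exact (mul_eq_zero.mp h0).resolve_right (pow_ne_zero _ hk1)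
    have hab : a = b := step_A lam a b hEv
    subst hab
    suffices ha : a = 0 by exact ⟨ha, ha⟩
    by_contra ha
    exact step_B lam a ha hEv
  · rintro ⟨rfl, rfl⟩
    show ∀ x z : ℂ, x ≠ 0 → z ≠ 0 → z - 1 ≠ 0 → x ^ 2 * z + lam * x + 1 ≠ 0 →
      x ^ (0 + 1) * (z - 1) ^ (0 + 1) - ((x * z)⁻¹) ^ (0 + 1) * (z - 1) ^ (0 + 1)
      + ((x * z)⁻¹) ^ (0 + 1) * ((x ^ 2 * z ^ 2 + lam * x * z + 1) / (z - 1)) ^ (0 + 1)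
      - (x * (z - 1) / (x ^ 2 * z + lam * x + 1)) ^ (0 + 1)
          * ((x ^ 2 * z ^ 2 + lam * x * z + 1) / (z - 1)) ^ (0 + 1)
      + (x * (z - 1) / (x ^ 2 * z + lam * x + 1)) ^ (0 + 1)
          * ((lam * x + x ^ 2 + 1) / (x ^ 2 * (z - 1))) ^ (0 + 1)
      - x ^ (0 + 1) * ((lam * x + x ^ 2 + 1) / (x ^ 2 * (z - 1))) ^ (0 + 1) = 0
    intro x z hx hz hz1 hP
    simp only [zero_add, pow_one]
    have hxz : x * z ≠ 0 := mul_ne_zero hx hz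
    obtain ⟨d1, hd1⟩ : ∃ d, x * z = d := ⟨_, rfl⟩
    obtain ⟨d2, hd2⟩ : ∃ d, z - 1 = d := ⟨_, rfl⟩
    obtain ⟨d3, hd3⟩ : ∃ d, x ^ 2 * z + lam * x + 1 = d := ⟨_, rfl⟩
    have h1 : d1 ≠ 0 := hd1 ▸ hxz
    have h2 : d2 ≠ 0 := hd2 ▸ hz1
    have h3 : d3 ≠ 0 := hd3 ▸ hP
    rw [hd1, hd2, hd3]
    field_simp
    subst hd1 hd2 hd3
    ring
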